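/- Let p₃ > 0, p₅ > 0, ρ > 0, and let D, R, I : ℝ → ℝ be differentiable functions satisfying D' = -4p₃·R·I + 2p₅ρ·I, R' = 0, I' = 4p₃·D·R - 2p₅ρ·D on ℝ, with D(0)² + R(0)² + I(0)² = ρ². Then for all τ ∈ ℝ: D(τ) = D(0)·cos(2(2p₃·R(0) - p₅ρ)·τ) - I(0)·sin(2(2p₃·R(0) - p₅ρ)·τ), R(τ) = R(0), and I(τ) = D(0)·sin(2(2p₃·R(0) - p₅ρ)·τ) + I(0)·cos(2(2p₃·R(0) - p₅ρ)·τ). -/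
import Mathlib


/-- Case 13 (p₂ = -p₃ < 0, p₅ > 0, p₁ = p₄ = 0) of the quadratic system: explicit solution. -/
theorem stmt_8 (p₃ p₅ ρ : ℝ) (hp₃ : 0 < p₃) (hp₅ : 0 < p₅) (hρ : 0 < ρ)
    (D R I : ℝ → ℝ)
    (hD : ∀ τ, HasDerivAt D (-(4 * p₃ * R τ * I τ) + 2 * p₅ * ρ * I τ) τ)
    (hR : ∀ τ, HasDerivAt R 0 τ)
    (hI : ∀ τ, HasDerivAt I (4 * p₃ * D τ * R τ - 2 * p₅ * ρ * D τ) τ)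
    (hsphere : D 0 ^ 2 + R 0 ^ 2 + I 0 ^ 2 = ρ ^ 2) :
    ∀ τ : ℝ,
      D τ = D 0 * Real.cos (2 * (2 * p₃ * R 0 - p₅ * ρ) * τ)
              - I 0 * Real.sin (2 * (2 * p₃ * R 0 - p₅ * ρ) * τ) ∧
      R τ = R 0 ∧
      I τ = D 0 * Real.sin (2 * (2 * p₃ * R 0 - p₅ * ρ) * τ)
              + I 0 * Real.cos (2 * (2 * p₃ * R 0 - p₅ * ρ) * τ) := by
  -- R is constant
  have hRconst : ∀ τ : ℝ, R τ = R 0 := by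
    intro τ
    have := is_const_of_deriv_eq_zero (f := R)
      (fun x => (hR x).differentiableAt) (fun x => (hR x).deriv) τ 0
    exact this
  set ω : ℝ := 2 * (2 * p₃ * R 0 - p₅ * ρ) with hω
  have hD' : ∀ τ, HasDerivAt D (-(ω * I τ)) τ := by
    intro τ
    have h := hD τ
    have : -(4 * p₃ * R τ * I τ) + 2 * p₅ * ρ * I τ = -(ω * I τ) := by
      rw [hRconst τ]; simp [hω]; ring
    rwa [this] at h
  have hI' : ∀ τ, HasDerivAt I (ω * D τ) τ := by
    intro τ
    have h := hI τ
    have : 4 * p₃ * D τ * R τ - 2 * p₅ * ρ * D τ = ω * D τ := by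
      rw [hRconst τ]; simp [hω]; ring
    rwa [this] at h
  -- rotating frame coordinates
  set u : ℝ → ℝ := fun τ => D τ * Real.cos (ω * τ) + I τ * Real.sin (ω * τ) with hu
  set v : ℝ → ℝ := fun τ => -(D τ * Real.sin (ω * τ)) + I τ * Real.cos (ω * τ) with hv
  have hlin : ∀ τ : ℝ, HasDerivAt (fun t : ℝ => ω * t) ω τ := by
    intro τ
    simpa using (hasDerivAt_id τ).const_mul ω
  have hcos : ∀ τ : ℝ, HasDerivAt (fun t => Real.cos (ω * t)) (-(ω * Real.sin (ω * τ))) τ := by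
    intro τ
    have := (hlin τ).cos
    simpa [mul_comm] using this
  have hsin : ∀ τ : ℝ, HasDerivAt (fun t => Real.sin (ω * t)) (ω * Real.cos (ω * τ)) τ := by
    intro τ
    have := (hlin τ).sin
    simpa [mul_comm] using this
  have hu' : ∀ τ : ℝ, HasDerivAt u 0 τ := by
    intro τ
    have h := ((hD' τ).mul (hcos τ)).add ((hI' τ).mul (hsin τ))
    have e : -(ω * I τ) * Real.cos (ω * τ) + D τ * -(ω * Real.sin (ω * τ)) +
        (ω * D τ * Real.sin (ω * τ) + I τ * (ω * Real.cos (ω * τ))) = 0 := by ring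
    rw [e] at h
    exact h
  have hv' : ∀ τ : ℝ, HasDerivAt v 0 τ := by
    intro τ
    have h := (((hD' τ).mul (hsin τ)).neg).add ((hI' τ).mul (hcos τ))
    have e : -(-(ω * I τ) * Real.sin (ω * τ) + D τ * (ω * Real.cos (ω * τ))) +
        (ω * D τ * Real.cos (ω * τ) + I τ * -(ω * Real.sin (ω * τ))) = 0 := by ring
    rw [e] at h
    exact h
  have huc : ∀ τ : ℝ, u τ = D 0 := by
    intro τ
    have := is_const_of_deriv_eq_zero (f := u)
      (fun x => (hu' x).differentiableAt) (fun x => (hu' x).deriv) τ 0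
    simpa [hu] using this
  have hvc : ∀ τ : ℝ, v τ = I 0 := by
    intro τ
    have := is_const_of_deriv_eq_zero (f := v)
      (fun x => (hv' x).differentiableAt) (fun x => (hv' x).deriv) τ 0
    simpa [hv] using this
  intro τ
  have h1 := huc τ
  have h2 := hvc τ
  simp only [hu, hv] at h1 h2
  have hpyth : Real.sin (ω * τ) ^ 2 + Real.cos (ω * τ) ^ 2 = 1 := Real.sin_sq_add_cos_sq _
  refine ⟨?_, hRconst τ, ?_⟩ <;> rw [← h1, ← h2]
  · linear_combination (-(D τ)) * hpyth
  · linear_combination (-(I τ)) * hpyth
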